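/- For p = 3, the set of primes θ satisfying Condition NC (no two nonzero consecutive cubic residues mod θ) is finite; in particular, Germain's Grand Plan fails to prove Fermat's Last Theorem for exponent 3 by this route. -/
import Mathlib


def NC (p θ : ℕ) : Prop :=
  ¬ ∃ r : ZMod θ, r ≠ 0 ∧ r + 1 ≠ 0 ∧ (∃ a : ZMod θ, a ^ p = r) ∧
    (∃ b : ZMod θ, b ^ p = r + 1)

lemma cube_of_pow_eq_one {θ : ℕ} [Fact θ.Prime] {m : ℕ} (hm : θ - 1 = 3 * m) (hm0 : 0 < m)
    {r : ZMod θ} (hr : r ≠ 0) (h : r ^ m = 1) : ∃ a : ZMod θ, a ^ 3 = r := by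
  obtain ⟨g, hg⟩ := IsCyclic.exists_generator (α := (ZMod θ)ˣ)
  obtain ⟨n, hn'⟩ : Units.mk0 r hr ∈ Submonoid.powers g :=
    mem_powers_iff_mem_zpowers.2 (hg _)
  have hn : g ^ n = Units.mk0 r hr := hn'
  have horder : orderOf g = 3 * m := by
    rw [orderOf_eq_card_of_forall_mem_zpowers hg, Nat.card_eq_fintype_card, ZMod.card_units, hm]
  have hpow : (g ^ (n * m)) = 1 := by
    rw [pow_mul, hn]
    ext
    push_cast
    exact h
  have hdvd : 3 * m ∣ n * m := horder ▸ orderOf_dvd_of_pow_eq_one hpow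
  obtain ⟨t, ht⟩ : 3 ∣ n := Nat.dvd_of_mul_dvd_mul_right hm0 hdvd
  refine ⟨((g ^ t : (ZMod θ)ˣ) : ZMod θ), ?_⟩
  have h3 : (g ^ t) ^ 3 = Units.mk0 r hr := by rw [← pow_mul, mul_comm, ← ht, hn]
  calc ((g ^ t : (ZMod θ)ˣ) : ZMod θ) ^ 3 = (((g ^ t) ^ 3 : (ZMod θ)ˣ) : ZMod θ) := by
        push_cast; ring
    _ = r := by rw [h3]; rfl

theorem stmt_15 : {θ : ℕ | θ.Prime ∧ NC 3 θ}.Finite := by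
  apply Set.Finite.subset (Set.finite_Iio 3600)
  rintro θ ⟨hp, hnc⟩
  simp only [Set.mem_Iio]
  by_contra hge
  push_neg at hge
  unfold NC at hnc
  haveI : Fact θ.Prime := ⟨hp⟩
  have key : ∀ n : ℕ, 0 < n → n < 3600 → ((n : ℕ) : ZMod θ) ≠ 0 := by
    intro n h0 h1 h
    rw [ZMod.natCast_eq_zero_iff] at h
    have := Nat.le_of_dvd h0 h
    omega
  have h2 : (2 : ZMod θ) ≠ 0 := by simpa using key 2 (by norm_num) (by norm_num)
  have h3 : (3 : ZMod θ) ≠ 0 := by simpa using key 3 (by norm_num) (by norm_num)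
  have h7 : (7 : ZMod θ) ≠ 0 := by simpa using key 7 (by norm_num) (by norm_num)
  have h8 : (8 : ZMod θ) ≠ 0 := by simpa using key 8 (by norm_num) (by norm_num)
  have h9 : (9 : ZMod θ) ≠ 0 := by simpa using key 9 (by norm_num) (by norm_num)
  have h11 : (11 : ZMod θ) ≠ 0 := by simpa using key 11 (by norm_num) (by norm_num)
  have h27 : (27 : ZMod θ) ≠ 0 := by simpa using key 27 (by norm_num) (by norm_num)
  have h28 : (28 : ZMod θ) ≠ 0 := by simpa using key 28 (by norm_num) (by norm_num)
  have h1331 : (1331 : ZMod θ) ≠ 0 := by simpa using key 1331 (by norm_num) (by norm_num)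
  have h2197 : (2197 : ZMod θ) ≠ 0 := by simpa using key 2197 (by norm_num) (by norm_num)
  have h3528 : (3528 : ZMod θ) ≠ 0 := by simpa using key 3528 (by norm_num) (by norm_num)
  have hnd : ¬ (3 ∣ θ) := by
    intro hd
    rcases hp.eq_one_or_self_of_dvd 3 hd with h | h <;> omega
  have hmod : θ % 3 = 1 ∨ θ % 3 = 2 := by omega
  rcases hmod with hmod | hmod
  · -- θ ≡ 1 (mod 3)
    obtain ⟨m, hm⟩ : ∃ m, θ - 1 = 3 * m := ⟨(θ - 1) / 3, by omega⟩
    have hm0 : 0 < m := by omega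
    set u := (2 : ZMod θ) ^ m with hu_def
    set v := (3 : ZMod θ) ^ m with hv_def
    set z := (7 : ZMod θ) ^ m with hz_def
    have fermat : ∀ a : ZMod θ, a ≠ 0 → (a ^ m) ^ 3 = 1 := by
      intro a ha
      rw [← pow_mul, show m * 3 = θ - 1 by omega]
      exact ZMod.pow_card_sub_one_eq_one ha
    have hu3 : u ^ 3 = 1 := fermat _ h2
    have hv3 : v ^ 3 = 1 := fermat _ h3
    have hz3 : z ^ 3 = 1 := fermat _ h7
    -- constraint 1 : u ≠ 1
    have hC1 : u ≠ 1 := by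
      intro h
      refine hnc ⟨1, one_ne_zero, ?_, ⟨1, one_pow 3⟩, ?_⟩
      · rw [show (1 : ZMod θ) + 1 = 2 by norm_num]; exact h2
      · rw [show (1 : ZMod θ) + 1 = 2 by norm_num]
        exact cube_of_pow_eq_one hm hm0 h2 h
    -- constraint 2 : z ≠ 1
    have hC2 : z ≠ 1 := by
      intro h
      refine hnc ⟨7, h7, ?_, cube_of_pow_eq_one hm hm0 h7 h, ⟨2, by norm_num⟩⟩
      rw [show (7 : ZMod θ) + 1 = 8 by norm_num]; exact h8
    -- constraint 3 : v ≠ 1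
    have hC3 : v ≠ 1 := by
      intro h
      refine hnc ⟨8, h8, ?_, ⟨2, by norm_num⟩, ?_⟩
      · rw [show (8 : ZMod θ) + 1 = 9 by norm_num]; exact h9
      · rw [show (8 : ZMod θ) + 1 = 9 by norm_num]
        refine cube_of_pow_eq_one hm hm0 h9 ?_
        rw [show (9 : ZMod θ) = 3 ^ 2 by norm_num, pow_right_comm, ← hv_def, h, one_pow]
    -- constraint 4 : z ≠ u
    have hC4 : z ≠ u := by
      intro h
      refine hnc ⟨27, h27, ?_, ⟨3, by norm_num⟩, ?_⟩
      · rw [show (27 : ZMod θ) + 1 = 28 by norm_num]; exact h28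
      · rw [show (27 : ZMod θ) + 1 = 28 by norm_num]
        refine cube_of_pow_eq_one hm hm0 h28 ?_
        rw [show (28 : ZMod θ) = 2 ^ 2 * 7 by norm_num, mul_pow, pow_right_comm,
          ← hu_def, ← hz_def, h]
        linear_combination hu3
    -- constraint 5 : v ^ 2 * z ^ 2 ≠ 1
    have hC5 : v ^ 2 * z ^ 2 ≠ 1 := by
      intro h5
      set w := (1331 : ZMod θ)⁻¹ with hw_def
      have hw : (1331 : ZMod θ) * w = 1 := mul_inv_cancel₀ h1331
      have hwnz : w ≠ 0 := inv_ne_zero h1331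
      have hr1 : (2197 : ZMod θ) * w + 1 = 3528 * w := by
        rw [show (3528 : ZMod θ) = 2197 + 1331 by norm_num, add_mul, hw]
      refine hnc ⟨2197 * w, mul_ne_zero h2197 hwnz, ?_, ?_, ?_⟩
      · rw [hr1]; exact mul_ne_zero h3528 hwnz
      · refine ⟨13 * (11 : ZMod θ)⁻¹, ?_⟩
        rw [mul_pow, inv_pow, show (13 : ZMod θ) ^ 3 = 2197 by norm_num,
          show (11 : ZMod θ) ^ 3 = 1331 by norm_num]
      · rw [hr1]
        refine cube_of_pow_eq_one hm hm0 (mul_ne_zero h3528 hwnz) ?_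
        have h1331m : (1331 : ZMod θ) ^ m = 1 := by
          rw [show (1331 : ZMod θ) = 11 ^ 3 by norm_num, ← pow_mul,
            show 3 * m = θ - 1 from hm.symm]
          exact ZMod.pow_card_sub_one_eq_one h11
        rw [mul_pow, hw_def, inv_pow, h1331m, inv_one, mul_one,
          show (3528 : ZMod θ) = 2 ^ 3 * 3 ^ 2 * 7 ^ 2 by norm_num, mul_pow, mul_pow,
          pow_right_comm, pow_right_comm (3 : ZMod θ), pow_right_comm (7 : ZMod θ),
          ← hu_def, ← hv_def, ← hz_def, hu3, one_mul]
        exact h5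
    -- constraint 6 : ¬ (u ^ 2 * v ^ 2 = 1 ∧ z * v ^ 2 = 1)
    have hC6 : ¬ (u ^ 2 * v ^ 2 = 1 ∧ z * v ^ 2 = 1) := by
      rintro ⟨h6a, h6b⟩
      set i := (3 : ZMod θ)⁻¹ with hi_def
      have hi : (3 : ZMod θ) * i = 1 := mul_inv_cancel₀ h3
      have hinz : i ≠ 0 := inv_ne_zero h3
      have hr1 : (4 : ZMod θ) * i + 1 = 7 * i := by
        rw [show (7 : ZMod θ) = 4 + 3 by norm_num, add_mul, hi]
      have hvinv : v⁻¹ = v ^ 2 := by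
        refine inv_eq_of_mul_eq_one_right ?_
        linear_combination hv3
      have him : i ^ m = v ^ 2 := by rw [hi_def, inv_pow, ← hv_def, hvinv]
      refine hnc ⟨4 * i, mul_ne_zero (by simpa using key 4 (by norm_num) (by norm_num)) hinz,
        ?_, ?_, ?_⟩
      · rw [hr1]; exact mul_ne_zero h7 hinz
      · refine cube_of_pow_eq_one hm hm0
          (mul_ne_zero (by simpa using key 4 (by norm_num) (by norm_num)) hinz) ?_
        rw [mul_pow, him, show (4 : ZMod θ) = 2 ^ 2 by norm_num, pow_right_comm, ← hu_def]
        exact h6a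
      · rw [hr1]
        refine cube_of_pow_eq_one hm hm0 (mul_ne_zero h7 hinz) ?_
        rw [mul_pow, him, ← hz_def]
        exact h6b
    -- final algebra
    have hu2 : u ^ 2 + u + 1 = 0 := by
      have h0 : (u - 1) * (u ^ 2 + u + 1) = 0 := by linear_combination hu3
      rcases mul_eq_zero.1 h0 with h | h
      · exact absurd (sub_eq_zero.1 h) hC1
      · exact h
    have hv2 : v ^ 2 + v + 1 = 0 := by
      have h0 : (v - 1) * (v ^ 2 + v + 1) = 0 := by linear_combination hv3
      rcases mul_eq_zero.1 h0 with h | h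
      · exact absurd (sub_eq_zero.1 h) hC3
      · exact h
    have hz2 : z ^ 2 + z + 1 = 0 := by
      have h0 : (z - 1) * (z ^ 2 + z + 1) = 0 := by linear_combination hz3
      rcases mul_eq_zero.1 h0 with h | h
      · exact absurd (sub_eq_zero.1 h) hC2
      · exact h
    have hvu : v = u ∨ v = u ^ 2 := by
      have h0 : (v - u) * (v - u ^ 2) = 0 := by linear_combination hv2 - v * hu2 + hu3
      rcases mul_eq_zero.1 h0 with h | h
      · exact Or.inl (sub_eq_zero.1 h)
      · exact Or.inr (sub_eq_zero.1 h)
    have hzu : z = u ∨ z = u ^ 2 := by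
      have h0 : (z - u) * (z - u ^ 2) = 0 := by linear_combination hz2 - z * hu2 + hu3
      rcases mul_eq_zero.1 h0 with h | h
      · exact Or.inl (sub_eq_zero.1 h)
      · exact Or.inr (sub_eq_zero.1 h)
    rcases hzu with hz' | hz'
    · exact hC4 hz'
    rcases hvu with hv' | hv'
    · refine hC5 ?_
      rw [hv', hz']
      linear_combination (u ^ 3 + 1) * hu3
    · refine hC6 ⟨?_, ?_⟩
      · rw [hv']
        linear_combination (u ^ 3 + 1) * hu3
      · rw [hv', hz']
        linear_combination (u ^ 3 + 1) * hu3
  · -- θ ≡ 2 (mod 3)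
    obtain ⟨k, hk⟩ : ∃ k, 2 * (θ - 1) + 1 = 3 * k := ⟨(2 * (θ - 1) + 1) / 3, by omega⟩
    refine hnc ⟨1, one_ne_zero, ?_, ⟨1, one_pow 3⟩, ⟨(2 : ZMod θ) ^ k, ?_⟩⟩
    · rw [show (1 : ZMod θ) + 1 = 2 by norm_num]; exact h2
    · calc ((2 : ZMod θ) ^ k) ^ 3 = ((2 : ZMod θ) ^ (θ - 1)) ^ 2 * 2 := by
            rw [← pow_mul, ← pow_mul, ← pow_succ]
            congr 1
            omega
        _ = 1 + 1 := by rw [ZMod.pow_card_sub_one_eq_one h2]; norm_num
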